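/- Let p_U be any probability measure on K absolutely continuous with respect to μ_0 with D(p_U‖μ_0) < ∞. Then the expected regret of the exponential-weights mixed strategies satisfies the exact identity: Σ_{t=1}^T ∫_K ℓ_t dμ_{t−1} − Σ_{t=1}^T ∫_K ℓ_t dp_U = η^{−1}·(D(p_U‖μ_0) − D(p_U‖μ_T)) + η^{−1}·Σ_{t=1}^T D(μ_{t−1}‖μ_t). -/

import Mathlib

open MeasureTheory

/-- The probability measure on `K` with density `e^{-g(x)} / ∫_K e^{-g}` with respect to
Lebesgue measure. -/
noncomputable def gibbsMeasure {d : ℕ} (K : Set (EuclideanSpace ℝ (Fin d)))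
    (g : EuclideanSpace ℝ (Fin d) → ℝ) : Measure (EuclideanSpace ℝ (Fin d)) :=
  (volume.restrict K).withDensity
    (fun x => ENNReal.ofReal (Real.exp (-g x) / ∫ y in K, Real.exp (-g y)))

/-- The exponential-weights mixed strategy at time `t`: the probability measure on `K`
with density proportional to `exp(−(η·Σ_{s=1}^t ℓ_s(x) + R(x)))`. -/
noncomputable def ewMeasure {d : ℕ} (K : Set (EuclideanSpace ℝ (Fin d)))
    (ℓ : ℕ → EuclideanSpace ℝ (Fin d) → ℝ) (R : EuclideanSpace ℝ (Fin d) → ℝ)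
    (η : ℝ) (t : ℕ) : Measure (EuclideanSpace ℝ (Fin d)) :=
  gibbsMeasure K (fun x => η * ∑ i ∈ Finset.Icc 1 t, ℓ i x + R x)

/-- Kullback–Leibler divergence `D(p‖q) = ∫ log (dp/dq) dp`. -/
noncomputable def klDiv' {α : Type*} [MeasurableSpace α] (p q : Measure α) : ℝ :=
  ∫ x, Real.log ((p.rnDeriv q x).toReal) ∂p

section Aux

variable {d : ℕ} {K : Set (EuclideanSpace ℝ (Fin d))} {g : EuclideanSpace ℝ (Fin d) → ℝ}

/-- The normalizing constant of a Gibbs measure. -/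
noncomputable def gibbsZ (K : Set (EuclideanSpace ℝ (Fin d)))
    (g : EuclideanSpace ℝ (Fin d) → ℝ) : ℝ :=
  ∫ y in K, Real.exp (-g y)

/-- The density of a Gibbs measure. -/
noncomputable def gibbsF (K : Set (EuclideanSpace ℝ (Fin d)))
    (g : EuclideanSpace ℝ (Fin d) → ℝ) : EuclideanSpace ℝ (Fin d) → ENNReal :=
  fun x => ENNReal.ofReal (Real.exp (-g x) / gibbsZ K g)

lemma gibbsMeasure_eq :
    gibbsMeasure K g = (volume.restrict K).withDensity (gibbsF K g) := rfl

lemma gibbs_exp_integrable (hK : MeasurableSet K) (hKfin : volume K ≠ ⊤)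
    (hg : Measurable g) {C : ℝ} (hb : ∀ x ∈ K, |g x| ≤ C) :
    Integrable (fun x => Real.exp (-g x)) (volume.restrict K) := by
  haveI : IsFiniteMeasure (volume.restrict K) :=
    ⟨by rw [Measure.restrict_apply_univ]; exact hKfin.lt_top⟩
  refine (integrable_const (Real.exp C)).mono' (hg.neg.exp).aestronglyMeasurable ?_
  filter_upwards [ae_restrict_mem hK] with x hx
  rw [Real.norm_eq_abs, abs_of_pos (Real.exp_pos _)]
  exact Real.exp_le_exp.2 (le_trans (neg_le_abs _) (by simpa using hb x hx))

lemma gibbsZ_pos (hK : MeasurableSet K) (hKfin : volume K ≠ ⊤) (hKpos : 0 < volume K)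
    (hg : Measurable g) {C : ℝ} (hb : ∀ x ∈ K, |g x| ≤ C) :
    0 < gibbsZ K g := by
  have h1 : ∀ x ∈ K, Real.exp (-C) ≤ Real.exp (-g x) := fun x hx =>
    Real.exp_le_exp.2 (neg_le_neg (le_trans (le_abs_self _) (hb x hx)))
  have h2 := setIntegral_ge_of_const_le_real hK hKfin h1 (gibbs_exp_integrable hK hKfin hg hb)
  refine lt_of_lt_of_le ?_ h2
  exact mul_pos (Real.exp_pos _) (ENNReal.toReal_pos hKpos.ne' hKfin)

lemma gibbsF_ne_zero (hZ : 0 < gibbsZ K g) (x : EuclideanSpace ℝ (Fin d)) :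
    gibbsF K g x ≠ 0 := by
  simp only [gibbsF, ne_eq, ENNReal.ofReal_eq_zero, not_le]
  positivity

lemma gibbsF_ne_top (x : EuclideanSpace ℝ (Fin d)) : gibbsF K g x ≠ ⊤ :=
  ENNReal.ofReal_ne_top

lemma gibbsF_measurable (hg : Measurable g) : Measurable (gibbsF K g) :=
  (ENNReal.measurable_ofReal).comp ((hg.neg.exp).div_const _)

lemma log_gibbsF (hZ : 0 < gibbsZ K g) (x : EuclideanSpace ℝ (Fin d)) :
    Real.log ((gibbsF K g x).toReal) = -g x - Real.log (gibbsZ K g) := by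
  rw [gibbsF, ENNReal.toReal_ofReal (by positivity),
    Real.log_div (Real.exp_ne_zero _) hZ.ne', Real.log_exp]

lemma gibbs_isProbability (hK : MeasurableSet K) (hKfin : volume K ≠ ⊤)
    (hKpos : 0 < volume K) (hg : Measurable g) {C : ℝ} (hb : ∀ x ∈ K, |g x| ≤ C) :
    IsProbabilityMeasure (gibbsMeasure K g) := by
  have hZ := gibbsZ_pos hK hKfin hKpos hg hb
  constructor
  rw [gibbsMeasure_eq, withDensity_apply _ MeasurableSet.univ, Measure.restrict_univ]
  simp only [gibbsF]
  have hint : Integrable (fun x => Real.exp (-g x) / gibbsZ K g) (volume.restrict K) :=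
    (gibbs_exp_integrable hK hKfin hg hb).div_const _
  rw [← ofReal_integral_eq_lintegral_ofReal hint
    (Filter.Eventually.of_forall fun x => by positivity)]
  rw [integral_div]
  rw [show (∫ a in K, Real.exp (-g a)) = gibbsZ K g from rfl, div_self hZ.ne']
  exact ENNReal.ofReal_one

lemma gibbs_ac : gibbsMeasure K g ≪ volume.restrict K := by
  rw [gibbsMeasure_eq]; exact withDensity_absolutelyContinuous _ _

lemma ac_gibbs (hZ : 0 < gibbsZ K g) (hg : Measurable g) :
    volume.restrict K ≪ gibbsMeasure K g := by
  rw [gibbsMeasure_eq]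
  exact withDensity_absolutelyContinuous' (gibbsF_measurable hg).aemeasurable
    (Filter.Eventually.of_forall (gibbsF_ne_zero hZ))

lemma rnDeriv_gibbs (μ : Measure (EuclideanSpace ℝ (Fin d))) [SigmaFinite μ]
    (hZ : 0 < gibbsZ K g) (hg : Measurable g) :
    μ.rnDeriv (gibbsMeasure K g) =ᵐ[volume.restrict K]
      fun x => (gibbsF K g x)⁻¹ * μ.rnDeriv (volume.restrict K) x := by
  rw [gibbsMeasure_eq]
  exact Measure.rnDeriv_withDensity_right μ (volume.restrict K)
    (gibbsF_measurable hg).aemeasurable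
    (Filter.Eventually.of_forall (gibbsF_ne_zero hZ))
    (Filter.Eventually.of_forall gibbsF_ne_top)

end Aux

/-- exact regret identity for the exponential-weights mixed strategies:
`Σ_t ∫ ℓ_t dμ_{t−1} − Σ_t ∫ ℓ_t dp_U
  = η⁻¹·(D(p_U‖μ_0) − D(p_U‖μ_T)) + η⁻¹·Σ_t D(μ_{t−1}‖μ_t)`. -/
theorem exp_weights_regret_identity
    {d : ℕ} (T : ℕ) (K : Set (EuclideanSpace ℝ (Fin d)))
    (hKcomp : IsCompact K) (hKconv : Convex ℝ K) (hKint : (interior K).Nonempty)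
    (hKpos : 0 < volume K)
    (ℓ : ℕ → EuclideanSpace ℝ (Fin d) → ℝ) (R : EuclideanSpace ℝ (Fin d) → ℝ)
    (hℓmeas : ∀ t, Measurable (ℓ t)) (hRmeas : Measurable R)
    (hℓbdd : ∀ t, ∃ C, ∀ x ∈ K, |ℓ t x| ≤ C) (hRbdd : ∃ C, ∀ x ∈ K, |R x| ≤ C)
    (η : ℝ) (hη : 0 < η)
    (pU : Measure (EuclideanSpace ℝ (Fin d))) [IsProbabilityMeasure pU]
    (hpUK : pU Kᶜ = 0)
    (hpUac : pU ≪ ewMeasure K ℓ R η 0)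
    (hKLfin : Integrable
      (fun x => Real.log ((pU.rnDeriv (ewMeasure K ℓ R η 0) x).toReal)) pU) :
    (∑ t ∈ Finset.Icc 1 T, ∫ x, ℓ t x ∂(ewMeasure K ℓ R η (t - 1))) -
        (∑ t ∈ Finset.Icc 1 T, ∫ x, ℓ t x ∂pU) =
      η⁻¹ * (klDiv' pU (ewMeasure K ℓ R η 0) - klDiv' pU (ewMeasure K ℓ R η T)) +
        η⁻¹ * ∑ t ∈ Finset.Icc 1 T, klDiv' (ewMeasure K ℓ R η (t - 1)) (ewMeasure K ℓ R η t) := by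
  classical
  have hK : MeasurableSet K := hKcomp.measurableSet
  have hKfin : volume K ≠ ⊤ := hKcomp.measure_lt_top.ne
  set ν := volume.restrict K with hν
  haveI : IsFiniteMeasure ν :=
    ⟨by rw [Measure.restrict_apply_univ]; exact hKfin.lt_top⟩
  -- cumulative losses
  set s : ℕ → EuclideanSpace ℝ (Fin d) → ℝ :=
    fun t x => η * ∑ i ∈ Finset.Icc 1 t, ℓ i x + R x with hs
  have hEW : ∀ t, ewMeasure K ℓ R η t = gibbsMeasure K (s t) := fun t => rfl
  have hsmeas : ∀ t, Measurable (s t) := by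
    intro t
    exact (measurable_const.mul (Finset.measurable_sum _ fun i _ => hℓmeas i)).add hRmeas
  have hsbdd : ∀ t, ∃ C, ∀ x ∈ K, |s t x| ≤ C := by
    intro t
    choose Cℓ hCℓ using hℓbdd
    obtain ⟨CR, hCR⟩ := hRbdd
    refine ⟨|η| * ∑ i ∈ Finset.Icc 1 t, Cℓ i + CR, fun x hx => ?_⟩
    refine le_trans (abs_add_le _ _) (add_le_add ?_ (hCR x hx))
    rw [abs_mul]
    refine mul_le_mul_of_nonneg_left ?_ (abs_nonneg _)
    exact le_trans (Finset.abs_sum_le_sum_abs _ _)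
      (Finset.sum_le_sum fun i _ => hCℓ i x hx)
  set Z : ℕ → ℝ := fun t => gibbsZ K (s t) with hZdef
  have hZpos : ∀ t, 0 < Z t := fun t =>
    gibbsZ_pos hK hKfin hKpos (hsmeas t) (hsbdd t).choose_spec
  haveI hprob : ∀ t, IsProbabilityMeasure (ewMeasure K ℓ R η t) := by
    intro t
    rw [hEW]
    exact gibbs_isProbability hK hKfin hKpos (hsmeas t) (hsbdd t).choose_spec
  have hgac : ∀ t, ewMeasure K ℓ R η t ≪ ν := fun t => by
    rw [hEW]; exact gibbs_ac
  have hacg : ∀ t, ν ≪ ewMeasure K ℓ R η t := fun t => by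
    rw [hEW]; exact ac_gibbs (hZpos t) (hsmeas t)
  have hpUν : pU ≪ ν := hpUac.trans (hgac 0)
  have hpU_mem : ∀ᵐ x ∂pU, x ∈ K := by
    rw [ae_iff]
    exact hpUK
  have hg_mem : ∀ t, ∀ᵐ x ∂(ewMeasure K ℓ R η t), x ∈ K :=
    fun t => (hgac t).ae_le (ae_restrict_mem hK)
  -- integrability of bounded measurable functions
  have hbint : ∀ (μ : Measure (EuclideanSpace ℝ (Fin d))) [IsFiniteMeasure μ],
      (∀ᵐ x ∂μ, x ∈ K) → ∀ (f : EuclideanSpace ℝ (Fin d) → ℝ), Measurable f →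
      (∃ C, ∀ x ∈ K, |f x| ≤ C) → Integrable f μ := by
    intro μ _ hμK f hf ⟨C, hC⟩
    refine (integrable_const C).mono' hf.aestronglyMeasurable ?_
    filter_upwards [hμK] with x hx
    simpa using hC x hx
  have hs_int_pU : ∀ t, Integrable (s t) pU :=
    fun t => hbint pU hpU_mem (s t) (hsmeas t) (hsbdd t)
  have hℓ_int_pU : ∀ t, Integrable (ℓ t) pU :=
    fun t => hbint pU hpU_mem (ℓ t) (hℓmeas t) (hℓbdd t)
  have hℓ_int_g : ∀ t u, Integrable (ℓ t) (ewMeasure K ℓ R η u) :=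
    fun t u => hbint _ (hg_mem u) (ℓ t) (hℓmeas t) (hℓbdd t)
  -- KL divergence of pU from ewMeasure t
  have key_ae : ∀ t, (fun x => Real.log ((pU.rnDeriv (ewMeasure K ℓ R η t) x).toReal))
      =ᵐ[pU] fun x => Real.log ((pU.rnDeriv ν x).toReal) + (s t x + Real.log (Z t)) := by
    intro t
    have h1 : pU.rnDeriv (ewMeasure K ℓ R η t) =ᵐ[pU]
        fun x => (gibbsF K (s t) x)⁻¹ * pU.rnDeriv ν x := by
      rw [hEW]
      exact (rnDeriv_gibbs pU (hZpos t) (hsmeas t)).filter_mono hpUν.ae_le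
    have h2 : ∀ᵐ x ∂pU, 0 < pU.rnDeriv ν x := Measure.rnDeriv_pos hpUν
    have h3 : ∀ᵐ x ∂pU, pU.rnDeriv ν x ≠ ⊤ := hpUν.ae_le (Measure.rnDeriv_ne_top pU ν)
    filter_upwards [h1, h2, h3] with x h1 h2 h3
    rw [h1, ENNReal.toReal_mul, ENNReal.toReal_inv,
      Real.log_mul (by
        simp only [ne_eq, inv_eq_zero]
        exact (ENNReal.toReal_ne_zero.2 ⟨gibbsF_ne_zero (hZpos t) x, gibbsF_ne_top x⟩))
        (by
          exact ENNReal.toReal_ne_zero.2 ⟨h2.ne', h3⟩),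
      Real.log_inv, log_gibbsF (hZpos t) x]
    ring
  have hA_int : Integrable (fun x => Real.log ((pU.rnDeriv ν x).toReal)) pU := by
    have h0 := hKLfin.congr (key_ae 0)
    have h2 : Integrable (fun x => s 0 x + Real.log (Z 0)) pU :=
      (hs_int_pU 0).add (integrable_const (Real.log (Z 0)))
    have := h0.sub h2
    refine this.congr (Filter.Eventually.of_forall fun x => ?_)
    simp only [Pi.sub_apply]
    ring
  set A : ℝ := ∫ x, Real.log ((pU.rnDeriv ν x).toReal) ∂pU with hA
  have hKL_pU : ∀ t, klDiv' pU (ewMeasure K ℓ R η t)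
      = A + (∫ x, s t x ∂pU + Real.log (Z t)) := by
    intro t
    have h2 : Integrable (fun x => s t x + Real.log (Z t)) pU :=
      (hs_int_pU t).add (integrable_const _)
    rw [klDiv', integral_congr_ae (key_ae t),
      integral_add hA_int h2,
      integral_add (hs_int_pU t) (integrable_const _), integral_const]
    simp
    rfl
  -- KL divergence between consecutive ewMeasures
  have key_step : ∀ u : ℕ, klDiv' (ewMeasure K ℓ R η u) (ewMeasure K ℓ R η (u + 1))
      = η * (∫ x, ℓ (u + 1) x ∂(ewMeasure K ℓ R η u))
        + (Real.log (Z (u + 1)) - Real.log (Z u)) := by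
    intro u
    haveI := hprob u
    have hrd : (ewMeasure K ℓ R η u).rnDeriv (ewMeasure K ℓ R η (u + 1))
        =ᵐ[ewMeasure K ℓ R η u]
        fun x => (gibbsF K (s (u + 1)) x)⁻¹ * gibbsF K (s u) x := by
      have h1 := rnDeriv_gibbs (K := K) (ewMeasure K ℓ R η u) (hZpos (u + 1)) (hsmeas (u + 1))
      have h2 : (ewMeasure K ℓ R η u).rnDeriv (volume.restrict K)
          =ᵐ[volume.restrict K] gibbsF K (s u) := by
        rw [hEW, gibbsMeasure_eq]
        exact Measure.rnDeriv_withDensity ν (gibbsF_measurable (hsmeas u))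
      rw [← hEW] at h1
      refine ((h1.and h2).filter_mono (hgac u).ae_le).mono fun x hx => ?_
      rw [hx.1]
      dsimp only
      rw [hx.2]
    have hae : (fun x => Real.log (((ewMeasure K ℓ R η u).rnDeriv
        (ewMeasure K ℓ R η (u + 1)) x).toReal))
        =ᵐ[ewMeasure K ℓ R η u]
        fun x => η * ℓ (u + 1) x + (Real.log (Z (u + 1)) - Real.log (Z u)) := by
      filter_upwards [hrd] with x hx
      rw [hx, ENNReal.toReal_mul, ENNReal.toReal_inv,
        Real.log_mul (by
          simp only [ne_eq, inv_eq_zero]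
          exact ENNReal.toReal_ne_zero.2 ⟨gibbsF_ne_zero (hZpos (u+1)) x, gibbsF_ne_top x⟩)
          (ENNReal.toReal_ne_zero.2 ⟨gibbsF_ne_zero (hZpos u) x, gibbsF_ne_top x⟩),
        Real.log_inv, log_gibbsF (hZpos (u+1)) x, log_gibbsF (hZpos u) x]
      have hsum : s (u + 1) x - s u x = η * ℓ (u + 1) x := by
        simp only [hs]
        rw [Finset.sum_Icc_succ_top (Nat.one_le_iff_ne_zero.2 (Nat.succ_ne_zero u))]
        ring
      nlinarith [hsum]
    have h4 : Integrable (fun x => η * ℓ (u + 1) x) (ewMeasure K ℓ R η u) :=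
      (hℓ_int_g (u + 1) u).const_mul η
    rw [klDiv', integral_congr_ae hae,
      integral_add h4 (integrable_const _),
      integral_const_mul, integral_const]
    simp
  -- reindex sums over Icc 1 T to range T
  have reindex : ∀ (f : ℕ → ℝ),
      ∑ t ∈ Finset.Icc 1 T, f t = ∑ i ∈ Finset.range T, f (i + 1) := by
    intro f
    rw [← Finset.Ico_add_one_right_eq_Icc, Finset.sum_Ico_eq_sum_range]
    simp [add_comm]
  -- the three sums
  have hsub : ∀ i : ℕ, (i + 1) - 1 = i := fun i => by omega
  have hsum1 : ∑ t ∈ Finset.Icc 1 T, ∫ x, ℓ t x ∂(ewMeasure K ℓ R η (t - 1))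
      = ∑ i ∈ Finset.range T, ∫ x, ℓ (i + 1) x ∂(ewMeasure K ℓ R η i) := by
    rw [reindex]
    exact Finset.sum_congr rfl fun i _ => by rw [hsub]
  have hsum3 : ∑ t ∈ Finset.Icc 1 T,
      klDiv' (ewMeasure K ℓ R η (t - 1)) (ewMeasure K ℓ R η t)
      = η * (∑ i ∈ Finset.range T, ∫ x, ℓ (i + 1) x ∂(ewMeasure K ℓ R η i))
        + (Real.log (Z T) - Real.log (Z 0)) := by
    rw [reindex]
    have : ∀ i ∈ Finset.range T,
        klDiv' (ewMeasure K ℓ R η ((i + 1) - 1)) (ewMeasure K ℓ R η (i + 1))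
        = η * (∫ x, ℓ (i + 1) x ∂(ewMeasure K ℓ R η i))
          + (Real.log (Z (i + 1)) - Real.log (Z i)) := fun i _ => by
      rw [hsub]; exact key_step i
    rw [Finset.sum_congr rfl this, Finset.sum_add_distrib, ← Finset.mul_sum,
      Finset.sum_range_sub (fun i => Real.log (Z i))]
  -- relation between ∫ s T dpU and ∫ s 0 dpU
  have hsT : ∫ x, s T x ∂pU
      = ∫ x, s 0 x ∂pU + η * ∑ t ∈ Finset.Icc 1 T, ∫ x, ℓ t x ∂pU := by
    have heq : ∀ x, s T x = s 0 x + η * ∑ i ∈ Finset.Icc 1 T, ℓ i x := by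
      intro x
      simp only [hs]
      rw [show Finset.Icc 1 0 = (∅ : Finset ℕ) from Finset.Icc_eq_empty (by omega)]
      simp
      ring
    calc ∫ x, s T x ∂pU
        = ∫ x, (s 0 x + η * ∑ i ∈ Finset.Icc 1 T, ℓ i x) ∂pU := by
          exact integral_congr_ae (Filter.Eventually.of_forall heq)
      _ = ∫ x, s 0 x ∂pU + η * ∑ t ∈ Finset.Icc 1 T, ∫ x, ℓ t x ∂pU := by
          have h5 : Integrable (fun x => η * ∑ i ∈ Finset.Icc 1 T, ℓ i x) pU :=
            (integrable_finset_sum _ fun i _ => hℓ_int_pU i).const_mul η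
          rw [integral_add (hs_int_pU 0) h5,
            integral_const_mul, integral_finset_sum _ fun i _ => hℓ_int_pU i]
  -- put everything together
  rw [hsum1, hsum3, hKL_pU 0, hKL_pU T, hsT]
  field_simp
  ring
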